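/- arXiv:1505.00237 — 3 statements merged into one kernel-verified Lean document; each statement's English description precedes it below -/
import Mathlib

section
/- The Casalbuoni bracket satisfies the graded Jacobi identity: for a p-form ω, q-form α, and r-form β, (−1)^{pr}{ω, {α, β}} + (−1)^{qp}{α, {β, ω}} + (−1)^{rq}{β, {ω, α}} = 0. -/
open scoped RealInnerProductSpace
open ExteriorAlgebra

/-- The degree-`p` component of the exterior algebra: the space of `p`-forms. -/
noncomputable def exteriorGrade (Φ : Type*) [AddCommGroup Φ] [Module ℝ Φ] (p : ℕ) :
    Submodule ℝ (ExteriorAlgebra ℝ Φ) :=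
  LinearMap.range (ExteriorAlgebra.ι ℝ : Φ →ₗ[ℝ] ExteriorAlgebra ℝ Φ) ^ p

section
variable {Φ : Type*} [NormedAddCommGroup Φ] [InnerProductSpace ℝ Φ]

lemma negpow_congr {a b : ℕ} (h : a % 2 = b % 2) : ((-1:ℝ))^a = (-1)^b := by
  conv_lhs => rw [← Nat.div_add_mod a 2]
  conv_rhs => rw [← Nat.div_add_mod b 2]
  rw [h, pow_add, pow_add, pow_mul, pow_mul]
  norm_num

lemma negpow_mul_two (k : ℕ) : ((-1:ℝ))^(k*2) = 1 := by
  rw [pow_mul, sq, ← mul_pow]; norm_num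

lemma negpow_two_mul (k : ℕ) : ((-1:ℝ))^(2*k) = 1 := by
  rw [mul_comm]; exact negpow_mul_two k

lemma memι (η : Φ) : ι ℝ η ∈ exteriorGrade Φ 1 := by
  rw [exteriorGrade, pow_one]; exact ⟨η, rfl⟩

lemma memAlg (c : ℝ) : algebraMap ℝ (ExteriorAlgebra ℝ Φ) c ∈ exteriorGrade Φ 0 := by
  rw [exteriorGrade, pow_zero]; exact Submodule.mem_one.mpr ⟨c, rfl⟩

lemma memOne : (1 : ExteriorAlgebra ℝ Φ) ∈ exteriorGrade Φ 0 := by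
  simpa using memAlg (Φ := Φ) 1

lemma mem_zero_ex {a : ExteriorAlgebra ℝ Φ} (h : a ∈ exteriorGrade Φ 0) :
    ∃ c : ℝ, algebraMap ℝ (ExteriorAlgebra ℝ Φ) c = a := by
  rwa [exteriorGrade, pow_zero, Submodule.mem_one] at h
end

/-- The Casalbuoni bracket on the exterior algebra of a real inner product space:
the bilinear bracket of degree `−2` with `{η, η'} = 2 g(η, η')` on vectors, extended
as a graded biderivation. -/
structure CasalbuoniBracket (Φ : Type*) [NormedAddCommGroup Φ] [InnerProductSpace ℝ Φ] where
  bracket : ExteriorAlgebra ℝ Φ →ₗ[ℝ] ExteriorAlgebra ℝ Φ →ₗ[ℝ] ExteriorAlgebra ℝ Φ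
  bracket_ι_ι : ∀ η η' : Φ,
    bracket (ι ℝ η) (ι ℝ η') = algebraMap ℝ (ExteriorAlgebra ℝ Φ) (2 * ⟪η, η'⟫)
  bracket_grade : ∀ (p q : ℕ) (ω α : ExteriorAlgebra ℝ Φ),
    ω ∈ exteriorGrade Φ p → α ∈ exteriorGrade Φ q →
    bracket ω α ∈ exteriorGrade Φ (p + q - 2)
  leibniz_right : ∀ (p q : ℕ) (ω α β : ExteriorAlgebra ℝ Φ),
    ω ∈ exteriorGrade Φ p → α ∈ exteriorGrade Φ q →
    bracket ω (α * β) = bracket ω α * β + ((-1 : ℝ) ^ (p * q)) • (α * bracket ω β)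
  leibniz_left : ∀ (p q r : ℕ) (ω α β : ExteriorAlgebra ℝ Φ),
    ω ∈ exteriorGrade Φ p → α ∈ exteriorGrade Φ q → β ∈ exteriorGrade Φ r →
    bracket (α * β) ω = ((-1 : ℝ) ^ (p * r)) • (bracket α ω * β) + α * bracket β ω

section Lemmas
variable {Φ : Type*} [NormedAddCommGroup Φ] [InnerProductSpace ℝ Φ]
  (cb : CasalbuoniBracket Φ)

lemma b_one_left {p : ℕ} {x : ExteriorAlgebra ℝ Φ} (hx : x ∈ exteriorGrade Φ p) :
    cb.bracket 1 x = 0 := by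
  have h := cb.leibniz_left p 0 0 x 1 1 hx memOne memOne
  simp only [mul_one, Nat.mul_zero, pow_zero, one_smul, one_mul] at h
  exact add_eq_left.mp h.symm

lemma b_one_right {p : ℕ} {x : ExteriorAlgebra ℝ Φ} (hx : x ∈ exteriorGrade Φ p) :
    cb.bracket x 1 = 0 := by
  have h := cb.leibniz_right p 0 x 1 1 hx memOne
  simp only [mul_one, Nat.mul_zero, pow_zero, one_smul, one_mul] at h
  exact add_eq_left.mp h.symm

lemma b_alg_left {p : ℕ} {x : ExteriorAlgebra ℝ Φ} (hx : x ∈ exteriorGrade Φ p) (c : ℝ) :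
    cb.bracket (algebraMap ℝ (ExteriorAlgebra ℝ Φ) c) x = 0 := by
  rw [Algebra.algebraMap_eq_smul_one, map_smul, LinearMap.smul_apply, b_one_left cb hx,
    smul_zero]

lemma b_alg_right {p : ℕ} {x : ExteriorAlgebra ℝ Φ} (hx : x ∈ exteriorGrade Φ p) (c : ℝ) :
    cb.bracket x (algebraMap ℝ (ExteriorAlgebra ℝ Φ) c) = 0 := by
  rw [Algebra.algebraMap_eq_smul_one, map_smul, b_one_right cb hx, smul_zero]

lemma b_zero_left {p : ℕ} {x a : ExteriorAlgebra ℝ Φ} (hx : x ∈ exteriorGrade Φ p)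
    (ha : a ∈ exteriorGrade Φ 0) : cb.bracket a x = 0 := by
  obtain ⟨c, rfl⟩ := mem_zero_ex ha
  exact b_alg_left cb hx c

lemma b_zero_right {p : ℕ} {x a : ExteriorAlgebra ℝ Φ} (hx : x ∈ exteriorGrade Φ p)
    (ha : a ∈ exteriorGrade Φ 0) : cb.bracket x a = 0 := by
  obtain ⟨c, rfl⟩ := mem_zero_ex ha
  exact b_alg_right cb hx c

/-- Right Leibniz where the graded left factor is itself a bracket. -/
lemma leibR' {p m n : ℕ} {x a b : ExteriorAlgebra ℝ Φ} (hx : x ∈ exteriorGrade Φ p)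
    (ha : a ∈ exteriorGrade Φ m) (hb : b ∈ exteriorGrade Φ n) (y : ExteriorAlgebra ℝ Φ) :
    cb.bracket x (cb.bracket a b * y)
      = cb.bracket x (cb.bracket a b) * y
        + ((-1 : ℝ) ^ (p * (m + n))) • (cb.bracket a b * cb.bracket x y) := by
  rcases le_or_gt 2 (m + n) with h | h
  · have hg := cb.bracket_grade m n a b ha hb
    rw [cb.leibniz_right p (m + n - 2) x (cb.bracket a b) y hx hg,
      negpow_congr (a := p * (m + n - 2)) (b := p * (m + n))
        (by
          conv_rhs => rw [show m + n = (m + n - 2) + 2 from by omega, Nat.mul_add]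
          omega)]
  · have hz : cb.bracket a b = 0 := by
      have : m = 0 ∨ n = 0 := by omega
      rcases this with h0 | h0
      · subst h0; exact b_zero_left cb hb ha
      · subst h0; exact b_zero_right cb ha hb
    simp [hz]

/-- Left Leibniz where the element being bracketed is itself a bracket. -/
lemma leibL' {m n q r : ℕ} {a b y z : ExteriorAlgebra ℝ Φ} (ha : a ∈ exteriorGrade Φ m)
    (hb : b ∈ exteriorGrade Φ n) (hy : y ∈ exteriorGrade Φ q) (hz : z ∈ exteriorGrade Φ r) :
    cb.bracket (y * z) (cb.bracket a b)
      = ((-1 : ℝ) ^ ((m + n) * r)) • (cb.bracket y (cb.bracket a b) * z)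
        + y * cb.bracket z (cb.bracket a b) := by
  rcases le_or_gt 2 (m + n) with h | h
  · have hg := cb.bracket_grade m n a b ha hb
    rw [cb.leibniz_left (m + n - 2) q r (cb.bracket a b) y z hg hy hz,
      negpow_congr (a := (m + n - 2) * r) (b := (m + n) * r)
        (by
          conv_rhs => rw [show m + n = (m + n - 2) + 2 from by omega, Nat.add_mul]
          omega)]
  · have hz' : cb.bracket a b = 0 := by
      have : m = 0 ∨ n = 0 := by omega
      rcases this with h0 | h0
      · subst h0; exact b_zero_left cb hb ha
      · subst h0; exact b_zero_right cb ha hb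
    simp [hz']

end Lemmas

section Antisymm
variable {Φ : Type*} [NormedAddCommGroup Φ] [InnerProductSpace ℝ Φ]
  (cb : CasalbuoniBracket Φ)

lemma b_ι_symm (a b : Φ) :
    cb.bracket (ι ℝ b) (ι ℝ a) = cb.bracket (ι ℝ a) (ι ℝ b) := by
  rw [cb.bracket_ι_ι, cb.bracket_ι_ι, real_inner_comm]

lemma antisymm_ι (a : Φ) {n : ℕ} {y : ExteriorAlgebra ℝ Φ} (hy : y ∈ exteriorGrade Φ n) :
    cb.bracket y (ι ℝ a) = -(((-1 : ℝ)) ^ n • cb.bracket (ι ℝ a) y) := by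
  refine Submodule.pow_induction_on_left'
    (LinearMap.range (ι ℝ : Φ →ₗ[ℝ] ExteriorAlgebra ℝ Φ))
    (C := fun n y _ =>
      cb.bracket y (ι ℝ a) = -(((-1 : ℝ)) ^ n • cb.bracket (ι ℝ a) y))
    ?_ ?_ ?_ hy
  · intro r
    rw [b_alg_left cb (memι a), b_alg_right cb (memι a)]
    simp
  · intro x y i hx hy ihx ihy
    simp only [map_add, LinearMap.add_apply, ihx, ihy, smul_add, neg_add]
  · intro m hm i x hx ih
    obtain ⟨η, rfl⟩ := hm
    rw [cb.leibniz_left 1 1 i (ι ℝ a) (ι ℝ η) x (memι a) (memι η) hx,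
      cb.leibniz_right 1 1 (ι ℝ a) (ι ℝ η) x (memι a) (memι η),
      ih, b_ι_symm cb a η]
    simp only [Nat.succ_eq_add_one, mul_neg, mul_smul_comm, smul_neg, smul_add, smul_smul,
      smul_mul_assoc, neg_neg]
    match_scalars <;> (try ring) <;>
      (ring_nf
       simp only [pow_add, negpow_mul_two, negpow_two_mul, mul_one, one_mul]
       try ring)

lemma b_antisymm {m : ℕ} {x : ExteriorAlgebra ℝ Φ} (hx : x ∈ exteriorGrade Φ m) :
    ∀ (n : ℕ) (y : ExteriorAlgebra ℝ Φ), y ∈ exteriorGrade Φ n →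
    cb.bracket y x = -(((-1 : ℝ)) ^ (m * n) • cb.bracket x y) := by
  refine Submodule.pow_induction_on_left'
    (LinearMap.range (ι ℝ : Φ →ₗ[ℝ] ExteriorAlgebra ℝ Φ))
    (C := fun m x _ => ∀ (n : ℕ) (y : ExteriorAlgebra ℝ Φ), y ∈ exteriorGrade Φ n →
      cb.bracket y x = -(((-1 : ℝ)) ^ (m * n) • cb.bracket x y))
    ?_ ?_ ?_ hx
  · intro r n y hy
    rw [b_alg_right cb hy, b_alg_left cb hy]
    simp
  · intro x1 x2 i h1 h2 ih1 ih2 n y hy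
    simp only [map_add, LinearMap.add_apply, ih1 n y hy, ih2 n y hy, smul_add, neg_add]
  · intro mm hm i x hx ih n y hy
    obtain ⟨η, rfl⟩ := hm
    rw [cb.leibniz_right n 1 y (ι ℝ η) x hy (memι η),
      cb.leibniz_left n 1 i y (ι ℝ η) x hy (memι η) hx,
      antisymm_ι cb η hy, ih n y hy]
    simp only [Nat.succ_eq_add_one, mul_neg, mul_smul_comm, smul_neg, smul_add, smul_smul,
      smul_mul_assoc, neg_neg, neg_mul, neg_smul]
    match_scalars <;> (try ring) <;>
      (try ring_nf
       simp only [pow_add, negpow_mul_two, negpow_two_mul, mul_one, one_mul]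
       try ring)

end Antisymm

section Jacobi
variable {Φ : Type*} [NormedAddCommGroup Φ] [InnerProductSpace ℝ Φ]

/-- The Jacobiator. -/
noncomputable def Jex (cb : CasalbuoniBracket Φ) (p q r : ℕ)
    (ω α β : ExteriorAlgebra ℝ Φ) : ExteriorAlgebra ℝ Φ :=
  ((-1 : ℝ) ^ (p * r)) • cb.bracket ω (cb.bracket α β)
    + ((-1 : ℝ) ^ (q * p)) • cb.bracket α (cb.bracket β ω)
    + ((-1 : ℝ) ^ (r * q)) • cb.bracket β (cb.bracket ω α)

variable (cb : CasalbuoniBracket Φ)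

lemma Jcyc (p q r : ℕ) (ω α β : ExteriorAlgebra ℝ Φ) :
    Jex cb p q r ω α β = Jex cb q r p α β ω := by
  unfold Jex; abel

lemma Jbase {p q : ℕ} {ω α : ExteriorAlgebra ℝ Φ} (hω : ω ∈ exteriorGrade Φ p)
    (hα : α ∈ exteriorGrade Φ q) (c : ℝ) :
    Jex cb p q 0 ω α (algebraMap ℝ (ExteriorAlgebra ℝ Φ) c) = 0 := by
  have h1 : cb.bracket α (algebraMap ℝ (ExteriorAlgebra ℝ Φ) c) = 0 := b_alg_right cb hα c
  have h2 : cb.bracket (algebraMap ℝ (ExteriorAlgebra ℝ Φ) c) ω = 0 := b_alg_left cb hω c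
  have h3 : cb.bracket (algebraMap ℝ (ExteriorAlgebra ℝ Φ) c) (cb.bracket ω α) = 0 :=
    b_alg_left cb (cb.bracket_grade p q ω α hω hα) c
  simp [Jex, h1, h2, h3]

lemma Jadd (p q r : ℕ) (ω α β₁ β₂ : ExteriorAlgebra ℝ Φ) :
    Jex cb p q r ω α (β₁ + β₂) = Jex cb p q r ω α β₁ + Jex cb p q r ω α β₂ := by
  simp only [Jex, map_add, LinearMap.add_apply, smul_add]
  abel

lemma Jstep {p q s : ℕ} {ω α β : ExteriorAlgebra ℝ Φ} (hω : ω ∈ exteriorGrade Φ p)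
    (hα : α ∈ exteriorGrade Φ q) (η : Φ) (hβ : β ∈ exteriorGrade Φ s)
    (h1 : Jex cb p q s ω α β = 0) (h2 : Jex cb p q 1 ω α (ι ℝ η) = 0) :
    Jex cb p q (s + 1) ω α (ι ℝ η * β) = 0 := by
  have e1 := cb.leibniz_right q 1 α (ι ℝ η) β hα (memι η)
  have e2 := leibR' cb hω hα (memι η) β
  have e3 := cb.leibniz_right p 1 ω (ι ℝ η) (cb.bracket α β) hω (memι η)
  have e4 := cb.leibniz_left p 1 s ω (ι ℝ η) β hω (memι η) hβ
  have e5 := leibR' cb hα (memι η) hω β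
  have e6 := cb.leibniz_right q 1 α (ι ℝ η) (cb.bracket β ω) hα (memι η)
  have e7 := leibL' cb hω hα (memι η) hβ
  have s1 : cb.bracket β ω = -(((-1 : ℝ)) ^ (p * s) • cb.bracket ω β) :=
    b_antisymm cb hω s β hβ
  have s2 : cb.bracket (ι ℝ η) ω = -(((-1 : ℝ)) ^ (p * 1) • cb.bracket ω (ι ℝ η)) :=
    b_antisymm cb hω 1 (ι ℝ η) (memι η)
  simp only [Jex] at h1 h2 ⊢
  rw [s1] at e4 e6 h1
  rw [s2] at e4 e5 h2
  rw [e1]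
  simp only [map_add, map_smul]
  rw [e2, e3, e4]
  simp only [map_add, map_smul, map_neg]
  rw [e5, e6, e7]
  simp only [map_add, map_smul, map_neg, mul_neg, neg_mul, smul_neg, neg_smul, mul_smul_comm,
    smul_mul_assoc, smul_smul, smul_add, mul_add, add_mul, neg_neg, zero_mul, mul_zero,
    neg_zero] at h1 h2
  have h2b := congrArg (fun z : ExteriorAlgebra ℝ Φ => z * β) h2
  have h1b := congrArg (fun z : ExteriorAlgebra ℝ Φ => ι ℝ η * z) h1
  simp only [map_add, map_smul, map_neg, mul_neg, neg_mul, smul_neg, neg_smul, mul_smul_comm,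
    smul_mul_assoc, smul_smul, smul_add, mul_add, add_mul, neg_neg, zero_mul, mul_zero,
    neg_zero] at h2b h1b
  simp only [map_add, map_smul, map_neg, mul_neg, neg_mul, smul_neg, neg_smul, mul_smul_comm,
    smul_mul_assoc, smul_smul, smul_add, mul_add, add_mul, neg_neg, zero_mul, mul_zero,
    neg_zero]
  linear_combination (norm :=
    (match_scalars <;> (try ring) <;>
      (try ring_nf
       simp only [pow_add, negpow_mul_two, negpow_two_mul, mul_one, one_mul]
       try ring)))
    ((-1 : ℝ) ^ (p * s)) • h2b + ((-1 : ℝ) ^ q) • h1b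

end Jacobi

section Tower
variable {Φ : Type*} [NormedAddCommGroup Φ] [InnerProductSpace ℝ Φ]
  (cb : CasalbuoniBracket Φ)

lemma Jvvv (a b c : Φ) : Jex cb 1 1 1 (ι ℝ a) (ι ℝ b) (ι ℝ c) = 0 := by
  have h1 := cb.bracket_ι_ι b c
  have h2 := cb.bracket_ι_ι c a
  have h3 := cb.bracket_ι_ι a b
  simp only [Jex, h1, h2, h3, b_alg_right cb (memι a), b_alg_right cb (memι b),
    b_alg_right cb (memι c), smul_zero, add_zero, zero_add]

lemma J2 {r : ℕ} {ω : ExteriorAlgebra ℝ Φ} (hω : ω ∈ exteriorGrade Φ r) (b c : Φ) :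
    Jex cb 1 1 r (ι ℝ b) (ι ℝ c) ω = 0 := by
  refine Submodule.pow_induction_on_left'
    (LinearMap.range (ι ℝ : Φ →ₗ[ℝ] ExteriorAlgebra ℝ Φ))
    (C := fun r ω _ => Jex cb 1 1 r (ι ℝ b) (ι ℝ c) ω = 0) ?_ ?_ ?_ hω
  · intro d
    exact Jbase cb (memι b) (memι c) d
  · intro x y i hx hy ihx ihy
    rw [Jadd cb 1 1 i (ι ℝ b) (ι ℝ c) x y, ihx, ihy, add_zero]
  · intro m hm i x hx ih
    obtain ⟨a, rfl⟩ := hm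
    exact Jstep cb (memι b) (memι c) a hx ih (Jvvv cb b c a)

lemma J1 {q : ℕ} {α : ExteriorAlgebra ℝ Φ} (hα : α ∈ exteriorGrade Φ q) (c : Φ) :
    ∀ (p : ℕ) (ω : ExteriorAlgebra ℝ Φ), ω ∈ exteriorGrade Φ p →
      Jex cb 1 p q (ι ℝ c) ω α = 0 := by
  refine Submodule.pow_induction_on_left'
    (LinearMap.range (ι ℝ : Φ →ₗ[ℝ] ExteriorAlgebra ℝ Φ))
    (C := fun q α _ => ∀ (p : ℕ) (ω : ExteriorAlgebra ℝ Φ), ω ∈ exteriorGrade Φ p →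
      Jex cb 1 p q (ι ℝ c) ω α = 0) ?_ ?_ ?_ hα
  · intro d p ω hω
    exact Jbase cb (memι c) hω d
  · intro x y i hx hy ihx ihy p ω hω
    rw [Jadd cb 1 p i (ι ℝ c) ω x y, ihx p ω hω, ihy p ω hω, add_zero]
  · intro m hm i x hx ih p ω hω
    obtain ⟨b, rfl⟩ := hm
    refine Jstep cb (memι c) hω b hx (ih p ω hω) ?_
    exact (Jcyc cb 1 p 1 (ι ℝ c) ω (ι ℝ b)).trans
      ((Jcyc cb p 1 1 ω (ι ℝ b) (ι ℝ c)).trans (J2 cb hω b c))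

lemma Jmaster {r : ℕ} {β : ExteriorAlgebra ℝ Φ} (hβ : β ∈ exteriorGrade Φ r) :
    ∀ (p q : ℕ) (ω α : ExteriorAlgebra ℝ Φ), ω ∈ exteriorGrade Φ p → α ∈ exteriorGrade Φ q →
      Jex cb p q r ω α β = 0 := by
  refine Submodule.pow_induction_on_left'
    (LinearMap.range (ι ℝ : Φ →ₗ[ℝ] ExteriorAlgebra ℝ Φ))
    (C := fun r β _ => ∀ (p q : ℕ) (ω α : ExteriorAlgebra ℝ Φ),
      ω ∈ exteriorGrade Φ p → α ∈ exteriorGrade Φ q → Jex cb p q r ω α β = 0) ?_ ?_ ?_ hβ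
  · intro d p q ω α hω hα
    exact Jbase cb hω hα d
  · intro x y i hx hy ihx ihy p q ω α hω hα
    rw [Jadd cb p q i ω α x y, ihx p q ω α hω hα, ihy p q ω α hω hα, add_zero]
  · intro m hm i x hx ih p q ω α hω hα
    obtain ⟨c, rfl⟩ := hm
    refine Jstep cb hω hα c hx (ih p q ω α hω hα) ?_
    exact (Jcyc cb p q 1 ω α (ι ℝ c)).trans
      ((Jcyc cb q 1 p α (ι ℝ c) ω).trans (J1 cb hα c p ω hω))

end Tower

/-- The graded Jacobi identity for the Casalbuoni bracket. -/
theorem casalbuoni_graded_jacobi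
    {Φ : Type*} [NormedAddCommGroup Φ] [InnerProductSpace ℝ Φ] [FiniteDimensional ℝ Φ]
    (cb : CasalbuoniBracket Φ) (p q r : ℕ) (ω α β : ExteriorAlgebra ℝ Φ)
    (hω : ω ∈ exteriorGrade Φ p) (hα : α ∈ exteriorGrade Φ q) (hβ : β ∈ exteriorGrade Φ r) :
    ((-1 : ℝ) ^ (p * r)) • cb.bracket ω (cb.bracket α β)
      + ((-1 : ℝ) ^ (q * p)) • cb.bracket α (cb.bracket β ω)
      + ((-1 : ℝ) ^ (r * q)) • cb.bracket β (cb.bracket ω α) = 0 :=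
  Jmaster cb hβ p q ω α hω hα
end

section
/- Let Φ be a finite-dimensional real inner product space, H an anti-self-adjoint linear map on Φ, and ω its associated 2-form under the index-raising isomorphism. Then for any vector η ∈ Φ, (1/4){ω, η} = H(η), where {·,·} is the Casalbuoni bracket. Consequently, the derivation (1/4){ω, ·} on Λ(Φ) coincides with the derivation induced by H. -/
open scoped RealInnerProductSpace
open ExteriorAlgebra

/-- For an anti-self-adjoint map `H` with associated 2-form
`ω = Σᵢ (H eᵢ) ∧ eᵢ` (index raising via an orthonormal basis), the Casalbuoni-bracket
action `(1/4){ω, ·}` reproduces `H` on vectors, and hence coincides with the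
derivation of `Λ(Φ)` induced by `H`. -/
theorem casalbuoni_bracket_of_two_form_is_generator
    {Φ : Type*} [NormedAddCommGroup Φ] [InnerProductSpace ℝ Φ] [FiniteDimensional ℝ Φ]
    (cb : CasalbuoniBracket Φ)
    (H : Φ →ₗ[ℝ] Φ) (hH : ∀ v w : Φ, ⟪H v, w⟫ = -⟪v, H w⟫)
    (e : OrthonormalBasis (Fin (Module.finrank ℝ Φ)) ℝ Φ)
    (ω : ExteriorAlgebra ℝ Φ)
    (hω : ω = ∑ i, ι ℝ (H (e i)) * ι ℝ (e i)) :
    (∀ η : Φ, (1 / 4 : ℝ) • cb.bracket ω (ι ℝ η) = ι ℝ (H η)) ∧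
    (∀ D : ExteriorAlgebra ℝ Φ →ₗ[ℝ] ExteriorAlgebra ℝ Φ,
      (∀ η : Φ, D (ι ℝ η) = ι ℝ (H η)) →
      (∀ A C : ExteriorAlgebra ℝ Φ, D (A * C) = D A * C + A * D C) →
      ∀ A : ExteriorAlgebra ℝ Φ, (1 / 4 : ℝ) • cb.bracket ω A = D A) := by
  classical

  have hι1 : ∀ x : Φ, ι ℝ x ∈ exteriorGrade Φ 1 := by
    intro x
    simpa only [exteriorGrade, pow_one] using LinearMap.mem_range_self _ x
  have hω2 : ω ∈ exteriorGrade Φ 2 := by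
    rw [hω]
    refine Submodule.sum_mem _ fun i _ => ?_
    have h2 : exteriorGrade Φ 2 = exteriorGrade Φ 1 * exteriorGrade Φ 1 := by
      simp only [exteriorGrade, pow_one, sq]
    rw [h2]
    exact Submodule.mul_mem_mul (hι1 _) (hι1 _)
  have hterm : ∀ (η : Φ) (i : Fin (Module.finrank ℝ Φ)),
      cb.bracket (ι ℝ (H (e i)) * ι ℝ (e i)) (ι ℝ η)
        = (2 * ⟪e i, H η⟫) • ι ℝ (e i) + (2 * ⟪e i, η⟫) • ι ℝ (H (e i)) := by
    intro η i
    rw [cb.leibniz_left 1 1 1 (ι ℝ η) (ι ℝ (H (e i))) (ι ℝ (e i)) (hι1 η) (hι1 _) (hι1 _),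
      cb.bracket_ι_ι, cb.bracket_ι_ι, hH]
    rw [← Algebra.commutes, ← Algebra.smul_def, ← Algebra.smul_def, smul_smul]
    congr 1
    congr 1
    ring
  have h1 : ∀ η : Φ, (1 / 4 : ℝ) • cb.bracket ω (ι ℝ η) = ι ℝ (H η) := by
    intro η
    rw [hω, map_sum, LinearMap.sum_apply]
    have : ∑ i, (cb.bracket (ι ℝ (H (e i)) * ι ℝ (e i))) (ι ℝ η)
        = ∑ i, ((2 * ⟪e i, H η⟫) • ι ℝ (e i) + (2 * ⟪e i, η⟫) • ι ℝ (H (e i))) := by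
      exact Finset.sum_congr rfl fun i _ => hterm η i
    rw [this, Finset.sum_add_distrib]
    have s1 : ∑ i, (2 * ⟪e i, H η⟫) • ι ℝ (e i) = (2 : ℝ) • ι ℝ (H η) := by
      rw [show ∑ i, (2 * ⟪e i, H η⟫) • ι ℝ (e i)
          = ι ℝ (∑ i, (2 * ⟪e i, H η⟫) • e i) by
        rw [map_sum (ι ℝ : Φ →ₗ[ℝ] ExteriorAlgebra ℝ Φ)]
        exact Finset.sum_congr rfl fun i _ => (map_smul _ _ _).symm]
      rw [← map_smul (ι ℝ : Φ →ₗ[ℝ] ExteriorAlgebra ℝ Φ)]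
      congr 1
      calc ∑ i, (2 * ⟪e i, H η⟫) • e i = (2:ℝ) • ∑ i, ⟪e i, H η⟫ • e i := by
            rw [Finset.smul_sum]; exact Finset.sum_congr rfl fun i _ => by rw [smul_smul]
        _ = (2:ℝ) • H η := by rw [e.sum_repr' (H η)]
    have s2 : ∑ i, (2 * ⟪e i, η⟫) • ι ℝ (H (e i)) = (2 : ℝ) • ι ℝ (H η) := by
      rw [← map_smul (ι ℝ : Φ →ₗ[ℝ] ExteriorAlgebra ℝ Φ), ← map_smul H]
      rw [show (∑ i, (2 * ⟪e i, η⟫) • ι ℝ (H (e i)))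
          = ι ℝ (H (∑ i, (2 * ⟪e i, η⟫) • e i)) by
        rw [map_sum H, map_sum (ι ℝ : Φ →ₗ[ℝ] ExteriorAlgebra ℝ Φ)]
        exact Finset.sum_congr rfl fun i _ => by rw [map_smul H, map_smul (ι ℝ : Φ →ₗ[ℝ] ExteriorAlgebra ℝ Φ)]]
      congr 2
      calc ∑ i, (2 * ⟪e i, η⟫) • e i = (2:ℝ) • ∑ i, ⟪e i, η⟫ • e i := by
            rw [Finset.smul_sum]; exact Finset.sum_congr rfl fun i _ => by rw [smul_smul]
        _ = (2:ℝ) • η := by rw [e.sum_repr' η]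
    rw [s1, s2, ← add_smul, smul_smul]
    norm_num
  refine ⟨h1, ?_⟩
  intro D hDι hDmul
  have h0 : (1 : ExteriorAlgebra ℝ Φ) ∈ exteriorGrade Φ 0 := by
    rw [exteriorGrade, pow_zero]
    exact Submodule.one_le.mp le_rfl
  have hD1 : D 1 = 0 := by
    have h := hDmul 1 1
    rw [one_mul, one_mul, mul_one] at h
    exact (left_eq_add.mp h)
  have hbr1 : cb.bracket ω 1 = 0 := by
    have h := cb.leibniz_right 2 0 ω 1 1 hω2 h0
    rw [mul_one, one_mul, mul_one, pow_zero, one_smul] at h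
    exact (left_eq_add.mp h)
  have keyq : ∀ (q : ℕ) (A : ExteriorAlgebra ℝ Φ), A ∈ exteriorGrade Φ q →
      (1 / 4 : ℝ) • cb.bracket ω A = D A := by
    intro q
    induction q with
    | zero =>
      intro A hA
      rw [exteriorGrade, pow_zero] at hA
      obtain ⟨r, rfl⟩ := hA
      simp only [LinearMap.toSpanSingleton_apply, map_smul, hbr1, hD1, smul_zero]
    | succ q ih =>
      intro A hA
      rw [exteriorGrade, pow_succ] at hA
      refine Submodule.mul_induction_on hA ?_ ?_
      · intro a ha b hb
        obtain ⟨x, rfl⟩ := hb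
        rw [cb.leibniz_right 2 q ω a (ι ℝ x) hω2 ha]
        have hsgn : ((-1 : ℝ) ^ (2 * q)) = 1 := by
          rw [pow_mul, neg_one_sq, one_pow]
        rw [hsgn, one_smul, smul_add, ← smul_mul_assoc, ← mul_smul_comm,
          ih a ha, h1 x, hDmul, hDι]
      · intro x y hx hy
        rw [map_add, map_add, smul_add, hx, hy]
  intro A
  have htop : (⨆ q, exteriorGrade Φ q) = ⊤ := by
    have hint : DirectSum.IsInternal (fun i : ℕ => (⋀[ℝ]^i Φ :
        Submodule ℝ (ExteriorAlgebra ℝ Φ))) :=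
      DirectSum.Decomposition.isInternal _
    exact hint.submodule_iSup_eq_top
  have hA : A ∈ ⨆ q, exteriorGrade Φ q := htop ▸ Submodule.mem_top
  refine Submodule.iSup_induction _ (motive := fun a => (1 / 4 : ℝ) • cb.bracket ω a = D a) hA
    keyq ?_ ?_
  · show (1 / 4 : ℝ) • cb.bracket ω 0 = D 0
    rw [map_zero, map_zero, smul_zero]
  · intro x y hx hy
    show (1 / 4 : ℝ) • cb.bracket ω (x + y) = D (x + y)
    rw [map_add, map_add, smul_add, hx, hy]
end

section
/- (Wick's theorem for Clifford algebras) In the Clifford algebra of a real inner product space Φ, the product of vectors η₁ ⋯ η_k equals the sum over all partial pairings (contraction patterns) of {1,...,k} of (−1)^σ times the product of the inner products g(η_i, η_j) over contracted pairs times the wedge product of the uncontracted vectors, where (−1)^σ is the sign of the permutation bringing contracted indices adjacent. -/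
open scoped RealInnerProductSpace

/-- The quadratic form `η ↦ g(η, η)` of a real inner product space, whose Clifford
algebra realizes the relation `ηη' + η'η = 2 g(η, η')`. -/
noncomputable def innerQuadraticForm (Φ : Type*) [NormedAddCommGroup Φ]
    [InnerProductSpace ℝ Φ] : QuadraticForm ℝ Φ :=
  LinearMap.BilinMap.toQuadraticMap (innerₗ Φ : LinearMap.BilinForm ℝ Φ)

/-- A contraction pattern on `{1, …, k}` is encoded by an involution `f`; the
contracted pairs are `{i, f i}` with `i < f i`, and the uncontracted indices are the
fixed points of `f`. The number of crossings of `f`: pairs `{i, f i}`, `{j, f j}`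
with `i < j < f i < f j`. -/
def wickCrossings {k : ℕ} (f : Equiv.Perm (Fin k)) : ℕ :=
  ((Finset.univ : Finset (Fin k × Fin k)).filter
    (fun x => x.1 < f x.1 ∧ x.2 < f x.2 ∧ x.1 < x.2 ∧ x.2 < f x.1 ∧ f x.1 < f x.2)).card

/-- The number of uncontracted indices enclosed by contracted pairs. -/
def wickNests {k : ℕ} (f : Equiv.Perm (Fin k)) : ℕ :=
  ∑ i ∈ Finset.univ.filter (fun i => i < f i),
    (Finset.univ.filter (fun m => f m = m ∧ i < m ∧ m < f i)).card

/-- The sign `(−1)^σ` of the minimal permutation bringing the contracted indices of the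
pairing `f` next to each other. -/
noncomputable def wickSign {k : ℕ} (f : Equiv.Perm (Fin k)) : ℝ :=
  (-1 : ℝ) ^ (wickCrossings f + wickNests f)

/-- The product of the contractions `g(ηᵢ, η_{f i})` over the contracted pairs of `f`. -/
noncomputable def wickContractions {Φ : Type*} [NormedAddCommGroup Φ]
    [InnerProductSpace ℝ Φ] {k : ℕ} (f : Equiv.Perm (Fin k)) (η : Fin k → Φ) : ℝ :=
  ∏ i ∈ Finset.univ.filter (fun i => i < f i), ⟪η i, η (f i)⟫

/-- The wedge product of the uncontracted vectors, in their original order. -/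
noncomputable def wickWedge {Φ : Type*} [NormedAddCommGroup Φ]
    [InnerProductSpace ℝ Φ] {k : ℕ} (f : Equiv.Perm (Fin k)) (η : Fin k → Φ) :
    ExteriorAlgebra ℝ Φ :=
  (((Finset.univ.filter (fun i => f i = i)).sort (· ≤ ·)).map
    (fun i => ExteriorAlgebra.ι ℝ (η i))).prod


section Infra

lemma sort_eq_cons {α} [LinearOrder α] {s : Finset α} {a : α} (ha : a ∈ s)
    (h : ∀ b ∈ s, a ≤ b) : s.sort (· ≤ ·) = a :: (s.erase a).sort (· ≤ ·) := by
  conv_lhs => rw [← Finset.insert_erase ha]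
  exact Finset.sort_insert _ (fun b hb => h b (Finset.mem_of_mem_erase hb))
    (Finset.notMem_erase a s)

lemma sort_map_mono {α β} [LinearOrder α] [LinearOrder β] (s : Finset α) (f : α ↪ β)
    (hf : Monotone f) : (s.map f).sort (· ≤ ·) = (s.sort (· ≤ ·)).map f := by
  refine (fun hp hs => List.Perm.eq_of_pairwise' (Finset.pairwise_sort _ _) hs hp) ?_ ?_
  · rw [← Multiset.coe_eq_coe]
    show ((s.map f).sort (· ≤ ·) : Multiset β) = Multiset.ofList ((s.sort (· ≤ ·)).map f)
    rw [← Multiset.map_coe, Finset.sort_eq, Finset.sort_eq, Finset.map_val]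
  · rw [List.pairwise_map]
    exact (Finset.pairwise_sort _ _).imp (fun h => hf h)

open CliffordAlgebra in
noncomputable def wedgeOf {M : Type*} [AddCommGroup M] [Module ℝ M] {ι : Type*}
    [LinearOrder ι] (v : ι → M) (s : Finset ι) : ExteriorAlgebra ℝ M :=
  ((s.sort (· ≤ ·)).map (fun i => ExteriorAlgebra.ι ℝ (v i))).prod

lemma wedgeOf_min_cons {M : Type*} [AddCommGroup M] [Module ℝ M] {ι : Type*}
    [LinearOrder ι] (v : ι → M) {s : Finset ι} {a : ι} (ha : a ∈ s)
    (h : ∀ b ∈ s, a ≤ b) :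
    wedgeOf v s = ExteriorAlgebra.ι ℝ (v a) * wedgeOf v (s.erase a) := by
  rw [wedgeOf, sort_eq_cons ha h, List.map_cons, List.prod_cons, wedgeOf]

lemma contract_wedgeOf {M : Type*} [AddCommGroup M] [Module ℝ M] {ι : Type*}
    [LinearOrder ι] (v : ι → M) (d : Module.Dual ℝ M) (s : Finset ι) :
    CliffordAlgebra.contractLeft (Q := (0 : QuadraticForm ℝ M)) d (wedgeOf v s)
      = ∑ j ∈ s, ((-1 : ℝ) ^ ((s.filter (· < j)).card) * d (v j)) • wedgeOf v (s.erase j) := by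
  induction s using Finset.strongInduction with
  | _ s ih =>
    rcases s.eq_empty_or_nonempty with rfl | hs
    · simp [wedgeOf, CliffordAlgebra.contractLeft_one]
    · set a := s.min' hs with ha_def
      have ha : a ∈ s := s.min'_mem hs
      have hmin : ∀ b ∈ s, a ≤ b := fun b hb => s.min'_le b hb
      rw [wedgeOf_min_cons v ha hmin, CliffordAlgebra.contractLeft_ι_mul,
        ih (s.erase a) (Finset.erase_ssubset ha)]
      rw [← Finset.add_sum_erase s _ ha, sub_eq_add_neg]
      congr 1
      · have h0 : (s.filter (· < a)).card = 0 := by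
          rw [Finset.card_eq_zero, Finset.filter_eq_empty_iff]
          exact fun b hb => not_lt.2 (hmin b hb)
        rw [h0, pow_zero, one_mul]
      · rw [Finset.mul_sum, ← Finset.sum_neg_distrib]
        refine Finset.sum_congr rfl fun j hj => ?_
        have hja : j ≠ a := Finset.ne_of_mem_erase hj
        have hjs : j ∈ s := Finset.mem_of_mem_erase hj
        have haj : a ∈ s.erase j := Finset.mem_erase.2 ⟨hja.symm, ha⟩
        have haj' : a < j := (hmin j hjs).lt_of_ne (fun h => hja h.symm)
        have hfil : s.filter (· < j) = insert a ((s.erase a).filter (· < j)) := by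
          ext b
          simp only [Finset.mem_filter, Finset.mem_insert, Finset.mem_erase]
          constructor
          · rintro ⟨hb, hlt⟩
            rcases eq_or_ne b a with rfl | hne
            · exact Or.inl rfl
            · exact Or.inr ⟨⟨hne, hb⟩, hlt⟩
          · rintro (rfl | ⟨⟨_, hb⟩, hlt⟩)
            · exact ⟨ha, haj'⟩
            · exact ⟨hb, hlt⟩
        have hcard : (s.filter (· < j)).card = ((s.erase a).filter (· < j)).card + 1 := by
          rw [hfil, Finset.card_insert_of_notMem]
          simp
        rw [wedgeOf_min_cons v haj (fun b hb => hmin b (Finset.mem_of_mem_erase hb)),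
          Finset.erase_right_comm, hcard, pow_succ, Algebra.mul_smul_comm, ← neg_smul]
        congr 1
        ring

open Equiv Equiv.Perm

variable {k : ℕ}

lemma inv_iff (f : Equiv.Perm (Fin k)) : f * f = 1 ↔ ∀ x, f (f x) = x := by
  constructor
  · intro h x
    have := congrArg (fun g => g x) h
    simpa using this
  · intro h
    exact Equiv.ext fun x => by rw [Equiv.Perm.mul_apply, h x, Equiv.Perm.one_apply]

-- case A : p = 0
lemma g0_zero (f' : Perm (Fin k)) : Equiv.Perm.decomposeFin.symm (0, f') 0 = 0 :=
  Equiv.Perm.decomposeFin_symm_apply_zero _ _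

lemma g0_succ (f' : Perm (Fin k)) (i : Fin k) :
    Equiv.Perm.decomposeFin.symm ((0 : Fin (k+1)), f') i.succ = (f' i).succ := by
  rw [Equiv.Perm.decomposeFin_symm_apply_succ, Equiv.swap_self, Equiv.refl_apply]

lemma g0_inv_iff (f' : Perm (Fin k)) :
    Equiv.Perm.decomposeFin.symm ((0 : Fin (k+1)), f') * Equiv.Perm.decomposeFin.symm (0, f') = 1
      ↔ f' * f' = 1 := by
  rw [inv_iff, inv_iff]
  constructor
  · intro h i
    have := h i.succ
    rw [g0_succ, g0_succ, Fin.succ_inj] at this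
    exact this
  · intro h x
    induction x using Fin.cases with
    | zero => rw [g0_zero, g0_zero]
    | succ i => rw [g0_succ, g0_succ, h]

-- case B : p = j.succ
lemma gj_zero (f' : Perm (Fin k)) (j : Fin k) :
    Equiv.Perm.decomposeFin.symm (j.succ, f') 0 = j.succ :=
  Equiv.Perm.decomposeFin_symm_apply_zero _ _

lemma gj_succ_self (f' : Perm (Fin k)) {j : Fin k} (hj : f' j = j) :
    Equiv.Perm.decomposeFin.symm (j.succ, f') j.succ = 0 := by
  rw [Equiv.Perm.decomposeFin_symm_apply_succ, hj, Equiv.swap_apply_right]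

lemma gj_succ (f' : Perm (Fin k)) {j i : Fin k} (hij : f' i ≠ j) :
    Equiv.Perm.decomposeFin.symm (j.succ, f') i.succ = (f' i).succ := by
  rw [Equiv.Perm.decomposeFin_symm_apply_succ,
    Equiv.swap_apply_of_ne_of_ne (Fin.succ_ne_zero _) (by simpa [Fin.succ_inj] using hij)]

lemma fix_ne {f' : Perm (Fin k)} (hf : ∀ x, f' (f' x) = x) {j i : Fin k} (hj : f' j = j)
    (hij : i ≠ j) : f' i ≠ j := by
  intro h
  apply hij
  rw [← hf i, h, hj]

lemma gj_inv_iff (f' : Perm (Fin k)) (j : Fin k) :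
    Equiv.Perm.decomposeFin.symm (j.succ, f') * Equiv.Perm.decomposeFin.symm (j.succ, f') = 1
      ↔ f' * f' = 1 ∧ f' j = j := by
  rw [inv_iff, inv_iff]
  constructor
  · intro h
    have hj : f' j = j := by
      have h0 := h 0
      rw [gj_zero, Equiv.Perm.decomposeFin_symm_apply_succ] at h0
      have h0' := congrArg (Equiv.swap (0 : Fin (k+1)) j.succ) h0
      rw [Equiv.swap_apply_self, Equiv.swap_apply_left, Fin.succ_inj] at h0'
      exact h0'
    refine ⟨?_, hj⟩
    intro i
    rcases eq_or_ne i j with rfl | hij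
    · rw [hj, hj]
    · rcases eq_or_ne (f' i) j with hfij | hfij
      · -- G i.succ = 0, G 0 = j.succ = i.succ would force i = j
        have h1 := h i.succ
        rw [Equiv.Perm.decomposeFin_symm_apply_succ, hfij, Equiv.swap_apply_right, gj_zero,
          Fin.succ_inj] at h1
        exact absurd h1.symm hij
      · have h1 := h i.succ
        rw [gj_succ _ hfij] at h1
        rcases eq_or_ne (f' (f' i)) j with h2 | h2
        · rw [Equiv.Perm.decomposeFin_symm_apply_succ, h2, Equiv.swap_apply_right] at h1
          exact absurd h1.symm (Fin.succ_ne_zero i)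
        · rw [gj_succ _ h2, Fin.succ_inj] at h1
          exact h1
  · rintro ⟨hf, hj⟩ x
    induction x using Fin.cases with
    | zero => rw [gj_zero, gj_succ_self _ hj]
    | succ i =>
      rcases eq_or_ne i j with rfl | hij
      · rw [gj_succ_self _ hj, gj_zero]
      · rw [gj_succ _ (fix_ne hf hj hij), gj_succ _ (show f' (f' i) ≠ j by rw [hf]; exact hij)]
        rw [hf]

variable {Φ : Type*} [NormedAddCommGroup Φ] [InnerProductSpace ℝ Φ]

lemma assoc_eq : QuadraticMap.associated (R := ℝ) (-innerQuadraticForm Φ) = -(innerₗ Φ : LinearMap.BilinForm ℝ Φ) := by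
  rw [innerQuadraticForm, ← LinearMap.BilinMap.toQuadraticMap_neg]
  refine QuadraticMap.associated_left_inverse ℝ ?_
  intro x y
  simp [real_inner_comm]

lemma equivExterior_apply (x : CliffordAlgebra (innerQuadraticForm Φ)) :
    CliffordAlgebra.equivExterior (innerQuadraticForm Φ) x
      = CliffordAlgebra.changeForm CliffordAlgebra.changeForm.associated_neg_proof x := rfl

lemma E_ι_mul (m : Φ) (x : CliffordAlgebra (innerQuadraticForm Φ)) :
    CliffordAlgebra.equivExterior (innerQuadraticForm Φ) (CliffordAlgebra.ι _ m * x)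
      = ExteriorAlgebra.ι ℝ m * CliffordAlgebra.equivExterior (innerQuadraticForm Φ) x
        + CliffordAlgebra.contractLeft (Q := (0 : QuadraticForm ℝ Φ)) (innerₗ Φ m)
            (CliffordAlgebra.equivExterior (innerQuadraticForm Φ) x) := by
  have h := CliffordAlgebra.changeForm_ι_mul
    (h := CliffordAlgebra.changeForm.associated_neg_proof (Q := innerQuadraticForm Φ)) m x
  have hm : (QuadraticMap.associated (R := ℝ) (-innerQuadraticForm Φ)) m
      = -((innerₗ Φ : LinearMap.BilinForm ℝ Φ) m) := by rw [assoc_eq]; rfl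
  rw [hm, show CliffordAlgebra.contractLeft (Q := (0 : QuadraticForm ℝ Φ))
      (-(innerₗ Φ m))
      = -CliffordAlgebra.contractLeft (Q := (0 : QuadraticForm ℝ Φ))
        (innerₗ Φ m) from map_neg _ _,
    LinearMap.neg_apply, sub_neg_eq_add] at h
  rw [equivExterior_apply, equivExterior_apply]
  exact h

end Infra
section Sets
open Equiv Equiv.Perm Finset

variable {k : ℕ}

def sEmb (k : ℕ) : Fin k ↪ Fin (k + 1) := ⟨Fin.succ, Fin.succ_injective k⟩

@[simp] lemma sEmb_apply (i : Fin k) : sEmb k i = i.succ := rfl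

lemma sEmb_mono : Monotone (sEmb k) := fun a b h => Fin.succ_le_succ_iff.mpr h

lemma pairs_g0 (f' : Perm (Fin k)) :
    univ.filter (fun i => i < decomposeFin.symm ((0 : Fin (k+1)), f') i)
      = (univ.filter (fun i => i < f' i)).map (sEmb k) := by
  ext x
  induction x using Fin.cases with
  | zero => simp [g0_zero, Fin.succ_ne_zero, Fin.ext_iff]
  | succ i => simp [g0_succ, Fin.succ_lt_succ_iff, Fin.succ_inj]

lemma fixed_g0 (f' : Perm (Fin k)) :
    univ.filter (fun x => decomposeFin.symm ((0 : Fin (k+1)), f') x = x)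
      = insert 0 ((univ.filter (fun i => f' i = i)).map (sEmb k)) := by
  ext x
  induction x using Fin.cases with
  | zero => simp [g0_zero]
  | succ i => simp [g0_succ, Fin.succ_inj, Fin.succ_ne_zero]

lemma pairs_gj {f' : Perm (Fin k)} {j : Fin k} (hf : ∀ x, f' (f' x) = x) (hj : f' j = j) :
    univ.filter (fun x => x < decomposeFin.symm (j.succ, f') x)
      = insert 0 ((univ.filter (fun i => i < f' i)).map (sEmb k)) := by
  ext x
  induction x using Fin.cases with
  | zero => simp [gj_zero, Fin.succ_pos]
  | succ i =>
    rcases eq_or_ne i j with rfl | hij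
    · simp only [Finset.mem_filter, Finset.mem_univ, true_and, gj_succ_self _ hj,
        Finset.mem_insert, Finset.mem_map, sEmb_apply, Fin.succ_inj]
      simp only [Fin.succ_ne_zero i, false_or]
      constructor
      · intro h; exact absurd h (by simp)
      · rintro ⟨a, ha, rfl⟩; rw [hj] at ha; exact absurd ha (lt_irrefl _)
    · simp [gj_succ _ (fix_ne hf hj hij), Fin.succ_lt_succ_iff, Fin.succ_ne_zero,
        Fin.succ_inj]

lemma fixed_gj {f' : Perm (Fin k)} {j : Fin k} (hf : ∀ x, f' (f' x) = x) (hj : f' j = j) :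
    univ.filter (fun x => decomposeFin.symm (j.succ, f') x = x)
      = ((univ.filter (fun i => f' i = i)).erase j).map (sEmb k) := by
  ext x
  induction x using Fin.cases with
  | zero =>
    simp [gj_zero, Fin.succ_ne_zero, (Fin.succ_ne_zero j).symm, eq_comm]
  | succ i =>
    rcases eq_or_ne i j with rfl | hij
    · simp [gj_succ_self _ hj, (Fin.succ_ne_zero i).symm, Fin.succ_inj, Finset.mem_erase]
    · simp [gj_succ _ (fix_ne hf hj hij), Fin.succ_inj, Finset.mem_erase, hij]

end Sets
section ContrWedge
open Equiv Equiv.Perm Finset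
open scoped RealInnerProductSpace

variable {Φ : Type*} [NormedAddCommGroup Φ] [InnerProductSpace ℝ Φ] {k : ℕ}

lemma contr_g0 (f' : Perm (Fin k)) (η : Fin (k+1) → Φ) :
    wickContractions (decomposeFin.symm ((0 : Fin (k+1)), f')) η
      = wickContractions f' (η ∘ Fin.succ) := by
  rw [wickContractions, pairs_g0, Finset.prod_map, wickContractions]
  exact Finset.prod_congr rfl fun i _ => by rw [sEmb_apply, g0_succ]; rfl

lemma contr_gj {f' : Perm (Fin k)} {j : Fin k} (hf : ∀ x, f' (f' x) = x) (hj : f' j = j)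
    (η : Fin (k+1) → Φ) :
    wickContractions (decomposeFin.symm (j.succ, f')) η
      = ⟪η 0, η j.succ⟫ * wickContractions f' (η ∘ Fin.succ) := by
  rw [wickContractions, pairs_gj hf hj, Finset.prod_insert (by simp [Fin.ext_iff]),
    Finset.prod_map, wickContractions, gj_zero]
  congr 1
  refine Finset.prod_congr rfl fun i hi => ?_
  rw [Finset.mem_filter] at hi
  have hij : i ≠ j := fun h => by rw [h, hj] at hi; exact absurd hi.2 (lt_irrefl _)
  rw [sEmb_apply, gj_succ _ (fix_ne hf hj hij)]; rfl

lemma wickWedge_eq (f : Perm (Fin k)) (η : Fin k → Φ) :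
    wickWedge f η = wedgeOf η (univ.filter (fun i => f i = i)) := rfl

lemma wedgeOf_map_succ (v : Fin (k+1) → Φ) (s : Finset (Fin k)) :
    wedgeOf v (s.map (sEmb k)) = wedgeOf (v ∘ Fin.succ) s := by
  rw [wedgeOf, wedgeOf, sort_map_mono _ _ sEmb_mono, List.map_map]
  rfl

lemma wedge_g0 (f' : Perm (Fin k)) (η : Fin (k+1) → Φ) :
    wickWedge (decomposeFin.symm ((0 : Fin (k+1)), f')) η
      = ExteriorAlgebra.ι ℝ (η 0) * wickWedge f' (η ∘ Fin.succ) := by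
  rw [wickWedge_eq, wickWedge_eq, fixed_g0]
  have h0 : (0 : Fin (k+1)) ∉ (univ.filter (fun i => f' i = i)).map (sEmb k) := by
    simp [Fin.ext_iff]
  rw [wedgeOf_min_cons η (Finset.mem_insert_self _ _) (fun b _ => Fin.zero_le b)]
  congr 1
  rw [← wedgeOf_map_succ]
  congr 1
  ext x
  simp only [Finset.mem_erase, Finset.mem_insert]
  constructor
  · rintro ⟨hx, rfl | hx2⟩
    · exact absurd rfl hx
    · exact hx2
  · intro hx
    exact ⟨fun h => h0 (h ▸ hx), Or.inr hx⟩

lemma wedge_gj {f' : Perm (Fin k)} {j : Fin k} (hf : ∀ x, f' (f' x) = x) (hj : f' j = j)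
    (η : Fin (k+1) → Φ) :
    wickWedge (decomposeFin.symm (j.succ, f')) η
      = wedgeOf (η ∘ Fin.succ) ((univ.filter (fun i => f' i = i)).erase j) := by
  rw [wickWedge_eq, fixed_gj hf hj, wedgeOf_map_succ]

end ContrWedge
section Counting
open Equiv Equiv.Perm Finset

variable {k : ℕ}

def Ccount (f' : Perm (Fin k)) (j : Fin k) : ℕ :=
  (univ.filter (fun i => i < f' i ∧ i < j ∧ j < f' i)).card

def Dcount (f' : Perm (Fin k)) (j : Fin k) : ℕ :=
  ((univ : Finset (Fin k × Fin k)).filter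
    (fun x => x.1 < f' x.1 ∧ ((f' x.2 = x.2 ∧ x.2 ≠ j) ∧ x.1 < x.2 ∧ x.2 < f' x.1))).card

def tcount (f' : Perm (Fin k)) (j : Fin k) : ℕ :=
  (univ.filter (fun i => f' i = i ∧ i < j)).card

lemma sum_card_filter {α β : Type*} [Fintype α] [Fintype β] (p : α → Prop) (q : α → β → Prop)
    [DecidablePred p] [∀ a, DecidablePred (q a)] :
    ∑ i ∈ univ.filter p, (univ.filter (q i)).card
      = ((univ : Finset (α × β)).filter (fun x => p x.1 ∧ q x.1 x.2)).card := by
  rw [Finset.sum_filter, Finset.card_filter, Fintype.sum_prod_type]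
  refine Finset.sum_congr rfl fun a _ => ?_
  by_cases hpa : p a
  · rw [if_pos hpa, Finset.card_filter]
    refine Finset.sum_congr rfl fun b _ => ?_
    simp [hpa]
  · rw [if_neg hpa]
    refine (Finset.sum_eq_zero fun b _ => ?_).symm
    simp [hpa]

lemma wickNests_eq (f : Perm (Fin k)) :
    wickNests f = (Finset.filter (fun x : Fin k × Fin k => x.1 < f x.1 ∧ (f x.2 = x.2 ∧ x.1 < x.2 ∧ x.2 < f x.1)) univ).card := by
  rw [wickNests]
  exact sum_card_filter _ _

lemma crossings_g0 (f' : Perm (Fin k)) :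
    wickCrossings (decomposeFin.symm ((0 : Fin (k+1)), f')) = wickCrossings f' := by
  rw [wickCrossings, wickCrossings, Finset.card_filter, Finset.card_filter,
    Fintype.sum_prod_type, Fintype.sum_prod_type]
  simp only [Fin.sum_univ_succ, g0_zero, g0_succ, lt_self_iff_false, false_and, and_false,
    if_false, Finset.sum_const_zero, zero_add, add_zero, Fin.succ_lt_succ_iff, Fin.not_lt_zero]

lemma nests_g0 (f' : Perm (Fin k)) :
    wickNests (decomposeFin.symm ((0 : Fin (k+1)), f')) = wickNests f' := by
  rw [wickNests_eq, wickNests_eq, Finset.card_filter, Finset.card_filter,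
    Fintype.sum_prod_type, Fintype.sum_prod_type]
  simp only [Fin.sum_univ_succ, g0_zero, g0_succ, lt_self_iff_false, false_and, and_false,
    if_false, Finset.sum_const_zero, zero_add, add_zero, Fin.succ_lt_succ_iff, Fin.not_lt_zero,
    Fin.succ_inj]

lemma crossings_gj {f' : Perm (Fin k)} {j : Fin k} (hf : ∀ x, f' (f' x) = x) (hj : f' j = j) :
    wickCrossings (decomposeFin.symm (j.succ, f')) = Ccount f' j + wickCrossings f' := by
  rw [wickCrossings, Finset.card_filter, Fintype.sum_prod_type, Fin.sum_univ_succ]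
  refine congrArg₂ (· + ·) ?_ ?_
  · rw [Fin.sum_univ_succ, Ccount, Finset.card_filter]
    simp only [lt_self_iff_false, false_and, and_false, if_false, zero_add]
    refine Finset.sum_congr rfl fun q _ => if_congr ?_ rfl rfl
    rcases eq_or_ne q j with rfl | hq
    · simp [gj_succ_self _ hj, hj]
    · rw [gj_zero, gj_succ _ (fix_ne hf hj hq)]
      simp [Fin.succ_lt_succ_iff, Fin.succ_pos]
  · rw [wickCrossings, Finset.card_filter, Fintype.sum_prod_type]
    refine Finset.sum_congr rfl fun i _ => ?_
    rw [Fin.sum_univ_succ]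
    simp only [Fin.not_lt_zero, false_and, and_false, if_false, zero_add]
    refine Finset.sum_congr rfl fun q _ => if_congr ?_ rfl rfl
    rcases eq_or_ne i j with rfl | hi
    · rw [gj_succ_self _ hj]
      simp [hj]
    · rcases eq_or_ne q j with rfl | hq
      · rw [gj_succ_self _ hj]
        simp [hj, gj_succ _ (fix_ne hf hj hi)]
      · rw [gj_succ _ (fix_ne hf hj hi), gj_succ _ (fix_ne hf hj hq)]
        simp [Fin.succ_lt_succ_iff]

lemma nests_gj {f' : Perm (Fin k)} {j : Fin k} (hf : ∀ x, f' (f' x) = x) (hj : f' j = j) :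
    wickNests (decomposeFin.symm (j.succ, f')) = tcount f' j + Dcount f' j := by
  rw [wickNests_eq, Finset.card_filter, Fintype.sum_prod_type, Fin.sum_univ_succ]
  refine congrArg₂ (· + ·) ?_ ?_
  · rw [Fin.sum_univ_succ, tcount, Finset.card_filter]
    simp only [lt_self_iff_false, false_and, and_false, if_false, zero_add]
    refine Finset.sum_congr rfl fun q _ => if_congr ?_ rfl rfl
    rcases eq_or_ne q j with rfl | hq
    · rw [gj_succ_self _ hj, gj_zero]
      simp [(Fin.succ_ne_zero q).symm]
    · rw [gj_zero, gj_succ _ (fix_ne hf hj hq)]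
      simp [Fin.succ_pos, Fin.succ_lt_succ_iff, Fin.succ_inj]
  · rw [Dcount, Finset.card_filter, Fintype.sum_prod_type]
    refine Finset.sum_congr rfl fun i _ => ?_
    rw [Fin.sum_univ_succ]
    simp only [Fin.not_lt_zero, false_and, and_false, if_false, zero_add]
    refine Finset.sum_congr rfl fun q _ => if_congr ?_ rfl rfl
    rcases eq_or_ne i j with rfl | hi
    · rw [gj_succ_self _ hj]
      simp [hj]
    · rcases eq_or_ne q j with rfl | hq
      · rw [gj_succ_self _ hj]
        simp [gj_succ _ (fix_ne hf hj hi), (Fin.succ_ne_zero q).symm]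
      · rw [gj_succ _ (fix_ne hf hj hi), gj_succ _ (fix_ne hf hj hq)]
        simp [Fin.succ_lt_succ_iff, Fin.succ_inj, hq]

lemma nests_split {f' : Perm (Fin k)} {j : Fin k} (hj : f' j = j) :
    wickNests f' = Ccount f' j + Dcount f' j := by
  rw [wickNests_eq, Finset.card_filter, Ccount, Finset.card_filter, Dcount, Finset.card_filter,
    Fintype.sum_prod_type, Fintype.sum_prod_type, ← Finset.sum_add_distrib]
  refine Finset.sum_congr rfl fun i _ => ?_
  have key : ∀ q : Fin k,
      (if (i < f' i ∧ (f' q = q ∧ i < q ∧ q < f' i)) then (1:ℕ) else 0)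
        = (if q = j then (if (i < f' i ∧ i < j ∧ j < f' i) then (1:ℕ) else 0) else 0)
          + (if (i < f' i ∧ ((f' q = q ∧ q ≠ j) ∧ i < q ∧ q < f' i)) then (1:ℕ) else 0) := by
    intro q
    rcases eq_or_ne q j with rfl | hq
    · simp [hj]
    · simp [hq]
  rw [Finset.sum_congr rfl (fun q _ => key q), Finset.sum_add_distrib, Finset.sum_ite_eq']
  simp

end Counting
section Signs
open Equiv Equiv.Perm Finset

variable {k : ℕ}

lemma sign_g0 (f' : Perm (Fin k)) :
    wickSign (decomposeFin.symm ((0 : Fin (k+1)), f')) = wickSign f' := by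
  rw [wickSign, wickSign, crossings_g0, nests_g0]

lemma sign_gj {f' : Perm (Fin k)} {j : Fin k} (hf : ∀ x, f' (f' x) = x) (hj : f' j = j) :
    wickSign (decomposeFin.symm (j.succ, f')) = wickSign f' * (-1) ^ (tcount f' j) := by
  rw [wickSign, wickSign, crossings_gj hf hj, nests_gj hf hj, ← pow_add]
  congr 1
  rw [nests_split (j := j) hj]
  omega

lemma tcount_eq (f' : Perm (Fin k)) (j : Fin k) :
    (((univ.filter (fun i => f' i = i)).filter (· < j)).card) = tcount f' j := by
  rw [Finset.filter_filter, tcount]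

end Signs

section Assembly
open Equiv Equiv.Perm Finset CliffordAlgebra
open scoped RealInnerProductSpace

variable {Φ : Type*} [NormedAddCommGroup Φ] [InnerProductSpace ℝ Φ] {k : ℕ}

lemma inner_apply' (x y : Φ) : (innerₗ Φ : LinearMap.BilinForm ℝ Φ) x y = ⟪x, y⟫ :=
  rfl

lemma rhs_rec (η : Fin (k+1) → Φ) :
    ∑ f ∈ univ.filter (fun f : Perm (Fin (k+1)) => f * f = 1),
        (wickSign f * wickContractions f η) • wickWedge f η
      = ExteriorAlgebra.ι ℝ (η 0) *
          (∑ f' ∈ univ.filter (fun f : Perm (Fin k) => f * f = 1),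
            (wickSign f' * wickContractions f' (η ∘ Fin.succ)) • wickWedge f' (η ∘ Fin.succ))
        + CliffordAlgebra.contractLeft (Q := (0 : QuadraticForm ℝ Φ))
            (innerₗ Φ (η 0))
            (∑ f' ∈ univ.filter (fun f : Perm (Fin k) => f * f = 1),
              (wickSign f' * wickContractions f' (η ∘ Fin.succ)) • wickWedge f' (η ∘ Fin.succ)) := by
  classical
  rw [Finset.sum_filter, ← Equiv.sum_comp (Equiv.Perm.decomposeFin.symm)
    (fun f : Perm (Fin (k+1)) => if f * f = 1 then (wickSign f * wickContractions f η) • wickWedge f η else 0),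
    Fintype.sum_prod_type, Fin.sum_univ_succ]
  congr 1
  · -- p = 0 part
    rw [Finset.mul_sum, Finset.sum_filter]
    refine Finset.sum_congr rfl fun f' _ => ?_
    by_cases hf' : f' * f' = 1
    · rw [if_pos ((g0_inv_iff f').mpr hf'), if_pos hf', sign_g0, contr_g0, wedge_g0,
        Algebra.mul_smul_comm]
    · rw [if_neg (fun h => hf' ((g0_inv_iff f').mp h)), if_neg hf']
  · -- p = succ part
    rw [Finset.sum_comm, map_sum, Finset.sum_filter]
    refine Finset.sum_congr rfl fun f' _ => ?_
    by_cases hf' : f' * f' = 1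
    · rw [if_pos hf']
      have hff : ∀ x, f' (f' x) = x := (inv_iff f').mp hf'
      have hstep : ∀ j : Fin k,
          (if decomposeFin.symm (j.succ, f') * decomposeFin.symm (j.succ, f') = 1 then
            (wickSign (decomposeFin.symm (j.succ, f')) *
              wickContractions (decomposeFin.symm (j.succ, f')) η) •
                wickWedge (decomposeFin.symm (j.succ, f')) η else 0)
          = if f' j = j then
            (wickSign (decomposeFin.symm (j.succ, f')) *
              wickContractions (decomposeFin.symm (j.succ, f')) η) •
                wickWedge (decomposeFin.symm (j.succ, f')) η else 0 := fun j =>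
        if_congr (by rw [gj_inv_iff]; exact and_iff_right hf') rfl rfl
      rw [Finset.sum_congr rfl (fun j _ => hstep j), ← Finset.sum_filter,
        LinearMap.map_smul, wickWedge_eq, contract_wedgeOf, Finset.smul_sum]
      refine Finset.sum_congr rfl fun j hj => ?_
      rw [Finset.mem_filter] at hj
      have hjfix : f' j = j := hj.2
      rw [sign_gj hff hjfix, contr_gj hff hjfix, wedge_gj hff hjfix, smul_smul, tcount_eq]
      congr 1
      · rw [show ((η ∘ Fin.succ) j) = η j.succ from rfl, inner_apply']
        ring
    · rw [if_neg hf']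
      refine Finset.sum_eq_zero fun j _ => ?_
      exact if_neg (fun h => hf' ((gj_inv_iff f' j).mp h).1)
end Assembly

/-- Wick's theorem for Clifford algebras: under the canonical identification of
`Cl(Φ, g)` with `Λ(Φ)`, the Clifford product `η₁ ⋯ η_k` is the sum over all
contraction patterns of the sign times the product of the contractions `g(ηᵢ, ηⱼ)`
times the wedge product of the uncontracted vectors. -/
theorem wick_theorem_clifford
    {Φ : Type*} [NormedAddCommGroup Φ] [InnerProductSpace ℝ Φ] [FiniteDimensional ℝ Φ]
    (k : ℕ) (η : Fin k → Φ) :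
    CliffordAlgebra.equivExterior (innerQuadraticForm Φ)
        (List.ofFn fun i => CliffordAlgebra.ι (innerQuadraticForm Φ) (η i)).prod
      = ∑ f ∈ Finset.univ.filter (fun f : Equiv.Perm (Fin k) => f * f = 1),
          (wickSign f * wickContractions f η) • wickWedge f η := by
  induction k with
  | zero =>
    have h1 : ∀ f : Equiv.Perm (Fin 0), f = 1 := fun f => Equiv.ext fun x => x.elim0
    have huniv : (Finset.univ.filter fun f : Equiv.Perm (Fin 0) => f * f = 1) = {1} := by
      refine Finset.eq_singleton_iff_unique_mem.mpr ⟨?_, fun f _ => h1 f⟩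
      simp
    rw [huniv, Finset.sum_singleton, List.ofFn_zero, List.prod_nil, equivExterior_apply,
      CliffordAlgebra.changeForm_one]
    simp [wickSign, wickCrossings, wickNests, wickContractions, wickWedge]
  | succ k ih =>
    rw [List.ofFn_succ, List.prod_cons, E_ι_mul,
      show (fun i : Fin k => CliffordAlgebra.ι (innerQuadraticForm Φ) (η i.succ))
        = (fun i => CliffordAlgebra.ι (innerQuadraticForm Φ) ((η ∘ Fin.succ) i)) from rfl,
      ih (η ∘ Fin.succ), rhs_rec η]
end
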